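/- For every zone Z and bound function α : X → ℕ, letting L = U = α: Extra⁺_{LU}(Z) ⊆ Closure_α(Z). -/

import Mathlib

attribute [local instance] Classical.propDecidable

noncomputable section

namespace TAform

/-! ### Weights `(≼, c)` with `c ∈ ℤ ∪ {∞}` -/

/-- Values in `ℤ ∪ {∞}`: `none` represents `∞`. -/
abbrev OVal := Option ℤ

/-- Addition on `ℤ ∪ {∞}`. -/
def ovAdd : OVal → OVal → OVal
  | some a, some b => some (a + b)
  | _, _ => none

/-- Strict order on `ℤ ∪ {∞}`. -/
def ovLt : OVal → OVal → Prop
  | some a, some b => a < b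
  | some _, none => True
  | none, _ => False

/-- A weight `(≼, c)`: `strict = true` means `≼` is `<`, `strict = false` means `≤`;
`val ∈ ℤ ∪ {∞}`. -/
structure Weight where
  strict : Bool
  val : OVal

/-- The weight `(<, ∞)`. -/
def winf : Weight := ⟨true, none⟩

/-- The weight `(≤, c)`. -/
def wle (c : ℤ) : Weight := ⟨false, some c⟩

/-- The weight `(<, c)`. -/
def wlt (c : ℤ) : Weight := ⟨true, some c⟩

/-- Addition: `(≼₁,c₁)+(≼₂,c₂) = (≼,c₁+c₂)` where `≼` is `<` iff `≼₁` or `≼₂` is `<`. -/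
def Weight.add (a b : Weight) : Weight := ⟨a.strict || b.strict, ovAdd a.val b.val⟩

/-- Order: `(≼₁,c₁) < (≼₂,c₂)` iff `c₁ < c₂`, or `c₁ = c₂`, `≼₁` is `<` and `≼₂` is `≤`. -/
def Weight.lt (a b : Weight) : Prop :=
  ovLt a.val b.val ∨ (a.val = b.val ∧ a.strict = true ∧ b.strict = false)

def Weight.le (a b : Weight) : Prop := Weight.lt a b ∨ a = b

/-- Minus: `−(≼,c) = (≼,−c)`. -/
def Weight.neg (w : Weight) : Weight := ⟨w.strict, Option.map (fun c => -c) w.val⟩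

/-- Floor: `⌊(<,c)⌋ = (≤,c−1)` and `⌊(≤,c)⌋ = (≤,c)`. -/
def Weight.floor (w : Weight) : Weight :=
  ⟨false, if w.strict then Option.map (fun c => c - 1) w.val else w.val⟩

/-- Ceiling (on integer-valued weights): `⌈(≤,c)⌉ = (≤,c)` and `⌈(<,c)⌉ = (<,c+1)`. -/
def Weight.ceil (w : Weight) : Weight :=
  if w.strict then ⟨true, Option.map (fun c => c + 1) w.val⟩ else w

/-- Maximum of two weights. -/
def Weight.max (a b : Weight) : Weight := if Weight.lt a b then b else a

/-- Satisfaction: `d ≼ c` for a real number `d` and a weight `(≼,c)`. -/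
def Weight.sat (w : Weight) (d : ℝ) : Prop :=
  match w.val with
  | none => True
  | some c => if w.strict then d < (c : ℝ) else d ≤ (c : ℝ)

/-! ### Distance graphs and their semantics -/

/-- Vertices: clocks of `X` together with the special vertex `x₀` (represented by `none`). -/
abbrev Vtx (X : Type*) := Option X

/-- A distance graph: a weight for every ordered pair of vertices.  The edge
`a →^{≼ c} b` represents the constraint `v b − v a ≼ c`. -/
abbrev DGraph (X : Type*) := Vtx X → Vtx X → Weight

/-- A clock valuation. -/
abbrev Val (X : Type*) := X → ℝ

/-- The valuation is nonnegative (clock valuations map into `ℝ≥0`). -/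
def Nonneg {X : Type*} (v : Val X) : Prop := ∀ x, 0 ≤ v x

/-- Extension of a valuation to all vertices, sending `x₀` to `0`. -/
def extV {X : Type*} (v : Val X) : Vtx X → ℝ
  | none => 0
  | some x => v x

/-- Semantics of a distance graph: the set of nonnegative clock valuations
(with `x₀ = 0`) satisfying all edge constraints. -/
def sem {X : Type*} (G : DGraph X) : Set (Val X) :=
  { v | Nonneg v ∧ ∀ a b, (G a b).sat (extV v b - extV v a) }

/-- Weight of the path `a :: l ++ [b]` in `G` (sum of the weights of its edges). -/
def pathWeight {X : Type*} (G : DGraph X) : Vtx X → List (Vtx X) → Vtx X → Weight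
  | a, [], b => G a b
  | a, c :: l, b => (G a c).add (pathWeight G c l b)

/-- `G` has only positive cycles: no cycle has weight at most `(<,0)`. -/
def OnlyPositiveCycles {X : Type*} (G : DGraph X) : Prop :=
  ∀ (a : Vtx X) (l : List (Vtx X)), ¬ (pathWeight G a l a).le (wlt 0)

/-- Canonical form: the weight of the edge from `a` to `b` is a lower bound of the
weights of all paths from `a` to `b`. -/
def PathCanonical {X : Type*} (G : DGraph X) : Prop :=
  ∀ (a b : Vtx X) (l : List (Vtx X)), (G a b).le (pathWeight G a l b)

/-- The weight `w` bounds the difference `v b − v a` over all `v ∈ S`. -/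
def Bounds {X : Type*} (S : Set (Val X)) (a b : Vtx X) (w : Weight) : Prop :=
  ∀ v ∈ S, w.sat (extV v b - extV v a)

/-- `G` is the canonical distance graph of the set `S`: it represents `S` and each of
its edge weights is the least weight bounding the corresponding difference over `S`
(equivalently, for sets defined by clock constraints, the lower bound of the weights
of paths between its endpoints). -/
def IsCanonGraph {X : Type*} (G : DGraph X) (S : Set (Val X)) : Prop :=
  sem G = S ∧ ∀ a b w, Bounds S a b w → (G a b).le w

/-- A zone: a set of valuations defined by a conjunction of constraints of the form
`x − y # c` or `x # c`, i.e. the set represented by some distance graph. -/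
def IsZone {X : Type*} (Z : Set (Val X)) : Prop := ∃ G : DGraph X, sem G = Z

/-! ### Regions and closure -/

/-- Region equivalence with respect to the bound function `α`: same integer parts
(or both above the bound), same set of clocks with zero fractional part, and the
same ordering of fractional parts of bounded clocks. -/
def regEq {X : Type*} (α : X → ℕ) (v w : Val X) : Prop :=
  (∀ x, ((α x : ℝ) < v x ∧ (α x : ℝ) < w x) ∨
    (⌊v x⌋ = ⌊w x⌋ ∧ (Int.fract (v x) = 0 ↔ Int.fract (w x) = 0))) ∧
  (∀ x y, v x ≤ (α x : ℝ) → v y ≤ (α y : ℝ) →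
    (Int.fract (v x) ≤ Int.fract (v y) ↔ Int.fract (w x) ≤ Int.fract (w y)))

/-- A region with respect to `α`: an equivalence class of region equivalence
(inside the nonnegative valuations). -/
def IsRegion {X : Type*} (α : X → ℕ) (R : Set (Val X)) : Prop :=
  ∃ v : Val X, Nonneg v ∧ R = { w | Nonneg w ∧ regEq α v w }

/-- Closure abstraction: the union of the regions (w.r.t. `α`) intersecting `S`. -/
def Closure {X : Type*} (α : X → ℕ) (S : Set (Val X)) : Set (Val X) :=
  ⋃₀ { R | IsRegion α R ∧ (R ∩ S).Nonempty }

/-! ### LU-bounds and the `Extra⁺_LU` extrapolation -/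

/-- `w > (≤, l)` where `l ∈ ℕ ∪ {−∞}` (`⊥` is `−∞`). -/
def gtLB (w : Weight) (l : WithBot ℕ) : Prop :=
  ∀ n : ℕ, l = (n : WithBot ℕ) → ovLt (some (n : ℤ)) w.val

/-- `−w > (≤, l)` where `l ∈ ℕ ∪ {−∞}`. -/
def negGtLB (w : Weight) (l : WithBot ℕ) : Prop :=
  ∃ c : ℤ, w.val = some c ∧ ∀ n : ℕ, l = (n : WithBot ℕ) → c < -(n : ℤ)

/-- The weight `(<, −u)` for `u ∈ ℕ ∪ {−∞}` (with `(<,∞)` when `u = −∞`). -/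
def wltNeg (u : WithBot ℕ) : Weight :=
  ⟨true, WithBot.recBotCoe none (fun n => some (-(n : ℤ))) u⟩

/-- The `Extra⁺_{LU}` extrapolation, applied edgewise to a distance graph `G`
(the canonical graph of a zone): `Z⁺_{xy} = (<,∞)` if `Z_{xy} > (≤,L_y)`, or
`−Z_{y0} > (≤,L_y)`, or `−Z_{x0} > (≤,U_x)` and `y ≠ x₀`;
`Z⁺_{x0} = (<,−U_x)` if `−Z_{x0} > (≤,U_x)`; and `Z⁺_{xy} = Z_{xy}` otherwise. -/
def extraLU {X : Type*} (L U : X → WithBot ℕ) (G : DGraph X) : DGraph X := fun a b =>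
  match a, b with
  | some x, some y =>
      if gtLB (G (some x) (some y)) (L y) ∨ negGtLB (G (some y) none) (L y) ∨
          negGtLB (G (some x) none) (U x)
      then winf else G (some x) (some y)
  | none, some y =>
      if gtLB (G none (some y)) (L y) ∨ negGtLB (G (some y) none) (L y)
      then winf else G none (some y)
  | some x, none =>
      if negGtLB (G (some x) none) (U x) then wltNeg (U x) else G (some x) none
  | none, none => G none none

/-! ### LU-preorder and its abstraction -/

/-- `l < r` where `l ∈ ℕ ∪ {−∞}` and `r : ℝ`. -/
def lbLtR (l : WithBot ℕ) (r : ℝ) : Prop := ∀ n : ℕ, l = (n : WithBot ℕ) → (n : ℝ) < r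

/-- The LU-preorder `ν' ≼_{LU} ν`: for each clock `x`, either `ν' x = ν x`,
or `L x < ν' x < ν x`, or `U x < ν x < ν' x`. -/
def LUpre {X : Type*} (L U : X → WithBot ℕ) (ν' ν : Val X) : Prop :=
  ∀ x, ν' x = ν x ∨ (lbLtR (L x) (ν' x) ∧ ν' x < ν x) ∨ (lbLtR (U x) (ν x) ∧ ν x < ν' x)

/-- The abstraction `a_{≼LU}(W) = { ν | ∃ ν' ∈ W, ν' ≼_{LU} ν }` (inside the
nonnegative valuations). -/
def aLU {X : Type*} (L U : X → WithBot ℕ) (W : Set (Val X)) : Set (Val X) :=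
  { ν | Nonneg ν ∧ ∃ ν' ∈ W, LUpre L U ν' ν }

/-! ### Guards, transitions, timed automata -/

/-- Comparison operators `# ∈ {<, ≤, =, ≥, >}`. -/
inductive Cmp | lt | le | eq | ge | gt
deriving DecidableEq

/-- Satisfaction of a comparison by real numbers. -/
def Cmp.sat : Cmp → ℝ → ℝ → Prop
  | .lt, a, b => a < b
  | .le, a, b => a ≤ b
  | .eq, a, b => a = b
  | .ge, a, b => a ≥ b
  | .gt, a, b => a > b

/-- A clock constraint (guard): a conjunction (list) of constraints `x # c`, `c ∈ ℕ`. -/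
abbrev Guard (X : Type*) := List (X × Cmp × ℕ)

/-- `v ⊨ g`: every conjunct of the guard holds. -/
def gsat {X : Type*} (v : Val X) (g : Guard X) : Prop :=
  ∀ p ∈ g, Cmp.sat p.2.1 (v p.1) (p.2.2 : ℝ)

/-- `[R]v`: reset the clocks in `R` to `0`, leaving the others unchanged. -/
def resetVal {X : Type*} (R : Set X) (v : Val X) : Val X := Set.indicator Rᶜ v

/-- One step `ν →^{δ,t} ν'` for a transition with guard `g` and reset set `R`:
`ν + δ ⊨ g` and `ν' = [R](ν + δ)`. -/
def step {X : Type*} (g : Guard X) (R : Set X) (δ : ℝ) (ν ν' : Val X) : Prop :=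
  0 ≤ δ ∧ gsat (fun x => ν x + δ) g ∧ ν' = resetVal R (fun x => ν x + δ)

/-- `Post(S,t)`: all valuations reachable by the transition from valuations in `S`. -/
def Post {X : Type*} (g : Guard X) (R : Set X) (S : Set (Val X)) : Set (Val X) :=
  { ν' | ∃ ν ∈ S, ∃ δ : ℝ, step g R δ ν ν' }

/-- A timed automaton `(Q, q₀, X, T, Acc)`. -/
structure TimedAuto (Q X : Type*) where
  init : Q
  trans : Set (Q × Guard X × Set X × Q)
  acc : Set Q

/-- `(q,ν) →^{δ,t} (q',ν')` for a transition `t = (q,g,R,q')` of the automaton. -/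
def TimedAuto.cstep {Q X : Type*} (A : TimedAuto Q X) (t : Q × Guard X × Set X × Q)
    (δ : ℝ) (c c' : Q × Val X) : Prop :=
  t ∈ A.trans ∧ c.1 = t.1 ∧ c'.1 = t.2.2.2 ∧ step t.2.1 t.2.2.1 δ c.2 c'.2


/-! ### Auxiliary lemmas for Statement 15 -/

namespace Stmt15

open Weight

lemma sat_iff {w : Weight} {c : ℤ} (h : w.val = some c) {d : ℝ} :
    w.sat d ↔ if w.strict = true then d < (c:ℝ) else d ≤ (c:ℝ) := by
  obtain ⟨s, ov⟩ := w
  simp only at h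
  subst h
  rfl

lemma sat_none {w : Weight} (h : w.val = none) (d : ℝ) : w.sat d := by
  obtain ⟨s, ov⟩ := w
  simp only at h
  subst h
  trivial

lemma sat_of_some {w : Weight} {c : ℤ} (h : w.val = some c) {d : ℝ} (hs : w.sat d) :
    d ≤ (c : ℝ) := by
  rw [sat_iff h] at hs
  split at hs
  · exact le_of_lt hs
  · exact hs

lemma sat_of_some_strict {w : Weight} {c : ℤ} (h : w.val = some c) (hst : w.strict = true)
    {d : ℝ} (hs : w.sat d) : d < (c : ℝ) := by
  rw [sat_iff h, if_pos hst] at hs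
  exact hs

lemma sat_some_of_lt {w : Weight} {c : ℤ} (h : w.val = some c) {d : ℝ}
    (hlt : d < (c:ℝ)) : w.sat d := by
  rw [sat_iff h]
  split
  · exact hlt
  · exact le_of_lt hlt

lemma sat_some_nonstrict {w : Weight} {c : ℤ} (h : w.val = some c) (hst : w.strict = false)
    {d : ℝ} (hle : d ≤ (c:ℝ)) : w.sat d := by
  rw [sat_iff h, if_neg (by simp [hst])]
  exact hle

lemma sat_add {w1 w2 : Weight} {d1 d2 : ℝ} (h1 : w1.sat d1) (h2 : w2.sat d2) :
    (w1.add w2).sat (d1 + d2) := by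
  rcases hv1 : w1.val with _ | c1
  · exact sat_none (by simp [Weight.add, ovAdd, hv1]) _
  rcases hv2 : w2.val with _ | c2
  · exact sat_none (by simp [Weight.add, ovAdd, hv1, hv2]) _
  have hval : (w1.add w2).val = some (c1 + c2) := by simp [Weight.add, ovAdd, hv1, hv2]
  have hb1 := sat_of_some hv1 h1
  have hb2 := sat_of_some hv2 h2
  rw [sat_iff hval]
  split
  · next hstr =>
    have hstr' : (w1.strict || w2.strict) = true := hstr
    rcases Bool.or_eq_true_iff.mp hstr' with hs | hs
    · have := sat_of_some_strict hv1 hs h1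
      push_cast
      linarith
    · have := sat_of_some_strict hv2 hs h2
      push_cast
      linarith
  · push_cast
    linarith

lemma le_val {w w' : Weight} (h : w.le w') {s : ℤ} (h' : w'.val = some s) :
    ∃ c : ℤ, w.val = some c ∧ c ≤ s := by
  rcases h with h | rfl
  · rcases h with h | ⟨hv, _, _⟩
    · rcases hw : w.val with _ | c
      · rw [hw, h'] at h; exact absurd h (by simp [ovLt])
      · rw [hw, h'] at h
        exact ⟨c, rfl, le_of_lt h⟩
    · exact ⟨s, hv.trans h', le_refl s⟩
  · exact ⟨s, h', le_refl s⟩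

lemma le_add_sat {w wa wb : Weight} (hle : w.le (wa.add wb)) {ca cb : ℤ}
    (ha : wa.val = some ca) (hb : wb.val = some cb) {d : ℝ} (hd : w.sat d) :
    d < (ca:ℝ) + cb ∨ (d ≤ (ca:ℝ) + cb ∧ wa.strict = false ∧ wb.strict = false) := by
  have hval : (wa.add wb).val = some (ca + cb) := by simp [Weight.add, ovAdd, ha, hb]
  have hstr : (wa.add wb).strict = (wa.strict || wb.strict) := rfl
  rcases hle with h | rfl
  · rcases h with h | ⟨hv, hws, hsum⟩
    · rcases hw : w.val with _ | c0
      · rw [hw, hval] at h; exact absurd h (by simp [ovLt])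
      · rw [hw, hval] at h
        have hd' := sat_of_some hw hd
        left
        have hlt : (c0:ℝ) < (ca:ℝ) + cb := by push_cast; exact_mod_cast h
        linarith
    · have hw : w.val = some (ca + cb) := by rw [hv, hval]
      have := sat_of_some_strict hw hws hd
      left
      push_cast at this
      exact this
  · rcases hst : (wa.add wb).strict with _ | _
    · have hd' := sat_of_some hval hd
      rw [hstr] at hst
      rcases Bool.or_eq_false_iff.mp hst with ⟨h1, h2⟩
      right
      push_cast at hd'
      exact ⟨hd', h1, h2⟩
    · have := sat_of_some_strict hval hst hd
      left
      push_cast at this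
      exact this


section Graph

variable {X : Type*} {G : DGraph X} {Z : Set (Val X)}

lemma zone_nonempty (hG : IsCanonGraph G Z) : Z.Nonempty := by
  by_contra h
  rw [Set.not_nonempty_iff_eq_empty] at h
  subst h
  have hb : ∀ w : Weight, Bounds (∅ : Set (Val X)) none none w := by
    intro w z hz
    exact absurd hz (Set.notMem_empty z)
  rcases hgv : (G none none).val with _ | c0
  · have h2 := hG.2 none none (wle 0) (hb _)
    rcases h2 with (h | ⟨hv, _, _⟩) | h
    · rw [hgv] at h; simp [wle, ovLt] at h
    · rw [hgv] at hv; simp [wle] at hv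
    · rw [h] at hgv; simp [wle] at hgv
  · have h2 := hG.2 none none ⟨true, some (c0 - 1)⟩ (hb _)
    rcases h2 with (h | ⟨hv, _, _⟩) | h
    · rw [hgv] at h; simp only [ovLt] at h; omega
    · rw [hgv] at hv; simp at hv; omega
    · rw [h] at hgv; simp at hgv

lemma triangle (hG : IsCanonGraph G Z) (a c b : Vtx X) :
    (G a b).le ((G a c).add (G c b)) := by
  apply hG.2
  intro z hz
  rw [← hG.1] at hz
  have h1 := hz.2 a c
  have h2 := hz.2 c b
  have heq : extV z b - extV z a = (extV z c - extV z a) + (extV z b - extV z c) := by ring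
  rw [heq]
  exact sat_add h1 h2

lemma diag_sat (hG : IsCanonGraph G Z) (a : Vtx X) : (G a a).sat 0 := by
  obtain ⟨z, hz⟩ := zone_nonempty hG
  rw [← hG.1] at hz
  have h := hz.2 a a
  rw [sub_self] at h
  exact h

end Graph

lemma gtLB_coe_iff (w : Weight) (m : ℕ) : gtLB w (m : WithBot ℕ) ↔ ovLt (some (m:ℤ)) w.val := by
  constructor
  · intro h; exact h m rfl
  · intro h n hn
    have hmn : m = n := by exact_mod_cast hn
    subst hmn; exact h

lemma negGtLB_coe_iff (w : Weight) (m : ℕ) :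
    negGtLB w (m : WithBot ℕ) ↔ ∃ c : ℤ, w.val = some c ∧ c < -(m:ℤ) := by
  constructor
  · rintro ⟨c, hc, h⟩; exact ⟨c, hc, h m rfl⟩
  · rintro ⟨c, hc, h⟩
    refine ⟨c, hc, fun n hn => ?_⟩
    have hmn : m = n := by exact_mod_cast hn
    subst hmn; exact h

lemma wltNeg_coe (m : ℕ) : wltNeg (m : WithBot ℕ) = ⟨true, some (-(m:ℤ))⟩ := by
  unfold wltNeg
  congr 1

lemma exists_sep {ι κ : Type*} [Fintype ι] [Fintype κ] [Nonempty ι]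
    (f : ι → ℝ) (sf : ι → Bool) (g : κ → Option (ℝ × Bool))
    (h : ∀ i j r b, g j = some (r, b) → f i < r ∨ (f i = r ∧ sf i = false ∧ b = false)) :
    ∃ d : ℝ, (∀ i, f i < d ∨ (f i = d ∧ sf i = false)) ∧
      (∀ j r b, g j = some (r, b) → d < r ∨ (d = r ∧ b = false)) := by
  classical
  set A := Finset.univ.sup' Finset.univ_nonempty f with hA
  obtain ⟨i0, -, hi0⟩ := Finset.exists_mem_eq_sup' Finset.univ_nonempty f
  have hfA : ∀ i, f i ≤ A := fun i => Finset.le_sup' f (Finset.mem_univ i)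
  by_cases hup : ∃ j r b, g j = some (r, b)
  · obtain ⟨j0, r0, b0, hj0⟩ := hup
    haveI : Nonempty κ := ⟨j0⟩
    set valOf : κ → ℝ := fun j => ((g j).map Prod.fst).getD (A + 1) with hvalOf
    set m := Finset.univ.inf' Finset.univ_nonempty valOf with hm
    obtain ⟨jm, -, hjm⟩ := Finset.exists_mem_eq_inf' Finset.univ_nonempty valOf
    have hmle : ∀ j, m ≤ valOf j := fun j => Finset.inf'_le valOf (Finset.mem_univ j)
    have hvsome : ∀ j r b, g j = some (r, b) → valOf j = r := by
      intro j r b hj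
      simp [hvalOf, hj]
    have hAm : A ≤ m := by
      rw [hm, hjm]
      rcases hgjm : g jm with _ | ⟨r, b⟩
      · simp only [hvalOf, hgjm, Option.map_none, Option.getD_none]
        linarith
      · rw [hvsome jm r b hgjm]
        rcases h i0 jm r b hgjm with hlt | ⟨heq, _, _⟩
        · rw [hA, hi0]; exact le_of_lt hlt
        · rw [hA, hi0]; exact le_of_eq heq
    rcases lt_or_eq_of_le hAm with hlt | heq
    · refine ⟨(A + m)/2, fun i => Or.inl ?_, fun j r b hj => Or.inl ?_⟩
      · calc f i ≤ A := hfA i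
          _ < (A + m)/2 := by linarith
      · calc (A + m)/2 < m := by linarith
          _ ≤ valOf j := hmle j
          _ = r := hvsome j r b hj
    · -- A = m
      have hjm_some : ∃ rm bm, g jm = some (rm, bm) ∧ rm = A := by
        rcases hgjm : g jm with _ | ⟨rm, bm⟩
        · exfalso
          have : m = A + 1 := by
            rw [hm, hjm]; simp [hvalOf, hgjm]
          linarith [heq, this]
        · refine ⟨rm, bm, rfl, ?_⟩
          rw [← hvsome jm rm bm hgjm, ← hjm, ← hm, ← heq]
      obtain ⟨rm, bm, hgjm, hrm⟩ := hjm_some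
      refine ⟨A, fun i => ?_, fun j r b hj => ?_⟩
      · rcases lt_or_eq_of_le (hfA i) with hlt | heqi
        · exact Or.inl hlt
        · rcases h i jm rm bm hgjm with hlt2 | ⟨_, hsf, _⟩
          · exact absurd (heqi ▸ hrm ▸ hlt2) (lt_irrefl _)
          · exact Or.inr ⟨heqi, hsf⟩
      · have hmr : m ≤ r := (hvsome j r b hj) ▸ hmle j
        rcases lt_or_eq_of_le hmr with hlt | heqr
        · exact Or.inl (heq ▸ hlt)
        · rcases h i0 j r b hj with hlt2 | ⟨_, _, hb⟩
          · exfalso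
            have hfi0 : f i0 = r := by rw [← hi0, ← hA, heq, heqr]
            rw [hfi0] at hlt2
            exact lt_irrefl r hlt2
          · exact Or.inr ⟨by rw [heq, heqr], hb⟩
  · refine ⟨A + 1, fun i => Or.inl (lt_of_le_of_lt (hfA i) (by linarith)),
      fun j r b hj => absurd ⟨j, r, b, hj⟩ hup⟩


/-- `a` is either `x₀` or a clock that is bounded (in `v`) or already treated (in `T`). -/
def Gd {X : Type*} (α : X → ℕ) (v : Val X) (T : Finset X) (a : Vtx X) : Prop :=
  ∀ x, a = some x → (v x ≤ (α x:ℝ) ∨ x ∈ T)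

lemma Gd_none {X : Type*} (α : X → ℕ) (v : Val X) (T : Finset X) : Gd α v T none :=
  fun x h => by cases h

lemma Gd_some {X : Type*} {α : X → ℕ} {v : Val X} {T : Finset X} {x : X}
    (h : v x ≤ (α x:ℝ) ∨ x ∈ T) : Gd α v T (some x) :=
  fun x' h' => by cases h'; exact h

lemma key {X : Type*} [Fintype X] (α : X → ℕ) (G : DGraph X) (Z : Set (Val X))
    (hG : IsCanonGraph G Z) (v : Val X)
    (hv : v ∈ sem (extraLU (fun x => (α x : WithBot ℕ)) (fun x => (α x : WithBot ℕ)) G)) :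
    ∃ u : Val X, u ∈ sem G ∧ (∀ x, v x ≤ (α x:ℝ) → u x = v x) ∧
      (∀ x, (α x:ℝ) < v x → (α x:ℝ) < u x) := by
  classical
  obtain ⟨hvnn, hvsat⟩ := hv
  have hred_xy : ∀ x y : X,
      extraLU (fun x => (α x : WithBot ℕ)) (fun x => (α x : WithBot ℕ)) G (some x) (some y) =
      if gtLB (G (some x) (some y)) ((α y : WithBot ℕ)) ∨
          negGtLB (G (some y) none) ((α y : WithBot ℕ)) ∨
          negGtLB (G (some x) none) ((α x : WithBot ℕ))
      then winf else G (some x) (some y) := fun _ _ => rfl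
  have hred_0y : ∀ y : X,
      extraLU (fun x => (α x : WithBot ℕ)) (fun x => (α x : WithBot ℕ)) G none (some y) =
      if gtLB (G none (some y)) ((α y : WithBot ℕ)) ∨
          negGtLB (G (some y) none) ((α y : WithBot ℕ))
      then winf else G none (some y) := fun _ => rfl
  have hred_x0 : ∀ x : X,
      extraLU (fun x => (α x : WithBot ℕ)) (fun x => (α x : WithBot ℕ)) G (some x) none =
      if negGtLB (G (some x) none) ((α x : WithBot ℕ))
      then wltNeg ((α x : WithBot ℕ)) else G (some x) none := fun _ => rfl
  -- F1 : bounded clocks do not have their lower bound relaxed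
  have F1 : ∀ x : X, v x ≤ (α x:ℝ) → ¬ negGtLB (G (some x) none) ((α x : WithBot ℕ)) := by
    intro x hx hneg
    have hs := hvsat (some x) none
    rw [hred_x0 x, if_pos hneg, wltNeg_coe] at hs
    have := sat_of_some_strict (w := ⟨true, some (-(α x:ℤ))⟩) rfl rfl hs
    have hxe : extV v none - extV v (some x) = 0 - v x := rfl
    rw [hxe] at this
    push_cast at this
    linarith
  -- satisfaction of x→0 edges for bounded clocks
  have Fx0 : ∀ x : X, v x ≤ (α x:ℝ) → (G (some x) none).sat (extV v none - extV v (some x)) := by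
    intro x hx
    have hs := hvsat (some x) none
    rwa [hred_x0 x, if_neg (F1 x hx)] at hs
  -- base invariant (1): edges among bounded clocks and x₀
  have base1 : ∀ a b : Vtx X, Gd α v ∅ a → Gd α v ∅ b →
      (G a b).sat (extV v b - extV v a) := by
    intro a b ha hb
    rcases a with _ | x <;> rcases b with _ | y
    · show (G none none).sat (extV v none - extV v none)
      rw [sub_self]
      exact diag_sat hG none
    · -- none → some y
      have hy : v y ≤ (α y:ℝ) := by
        rcases hb y rfl with h | h
        · exact h
        · exact absurd h (Finset.notMem_empty y)
      by_cases h1 : gtLB (G none (some y)) ((α y : WithBot ℕ)) ∨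
          negGtLB (G (some y) none) ((α y : WithBot ℕ))
      · rcases h1 with h1 | h1
        · rcases hval : (G none (some y)).val with _ | c
          · exact sat_none hval _
          · have h1' := (gtLB_coe_iff _ (α y)).mp h1
            rw [hval] at h1'
            simp only [ovLt] at h1'
            apply sat_some_of_lt hval
            have hc : ((α y:ℕ):ℝ) < (c:ℝ) := by exact_mod_cast h1'
            have hxe : extV v (some y) - extV v none = v y - 0 := rfl
            rw [hxe]
            linarith
        · exact absurd h1 (F1 y hy)
      · have hs := hvsat none (some y)
        rwa [hred_0y y, if_neg h1] at hs
    · -- some x → none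
      have hx : v x ≤ (α x:ℝ) := by
        rcases ha x rfl with h | h
        · exact h
        · exact absurd h (Finset.notMem_empty x)
      exact Fx0 x hx
    · -- some x → some y
      have hx : v x ≤ (α x:ℝ) := by
        rcases ha x rfl with h | h
        · exact h
        · exact absurd h (Finset.notMem_empty x)
      have hy : v y ≤ (α y:ℝ) := by
        rcases hb y rfl with h | h
        · exact h
        · exact absurd h (Finset.notMem_empty y)
      by_cases h1 : gtLB (G (some x) (some y)) ((α y : WithBot ℕ)) ∨
          negGtLB (G (some y) none) ((α y : WithBot ℕ)) ∨
          negGtLB (G (some x) none) ((α x : WithBot ℕ))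
      · rcases h1 with h1 | h1 | h1
        · rcases hval : (G (some x) (some y)).val with _ | c
          · exact sat_none hval _
          · have h1' := (gtLB_coe_iff _ (α y)).mp h1
            rw [hval] at h1'
            simp only [ovLt] at h1'
            apply sat_some_of_lt hval
            have hc : ((α y:ℕ):ℝ) < (c:ℝ) := by exact_mod_cast h1'
            have hxe : extV v (some y) - extV v (some x) = v y - v x := rfl
            rw [hxe]
            have := hvnn x
            linarith
        · exact absurd h1 (F1 y hy)
        · exact absurd h1 (F1 x hx)
      · have hs := hvsat (some x) (some y)
        rwa [hred_xy x y, if_neg h1] at hs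
  -- base invariant (2)
  have base2 : ∀ a : Vtx X, Gd α v ∅ a → ∀ y : X, (α y:ℝ) < v y → ∀ c : ℤ,
      (G a (some y)).val = some c → (α y:ℝ) < extV v a + c := by
    intro a ha y hy c hc
    rcases a with _ | x
    · -- a = x₀
      show (α y:ℝ) < 0 + c
      by_cases h1 : gtLB (G none (some y)) ((α y : WithBot ℕ)) ∨
          negGtLB (G (some y) none) ((α y : WithBot ℕ))
      · rcases h1 with h1 | h1
        · have h1' := (gtLB_coe_iff _ (α y)).mp h1
          rw [hc] at h1'
          simp only [ovLt] at h1'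
          have : ((α y:ℕ):ℝ) < (c:ℝ) := by exact_mod_cast h1'
          linarith
        · obtain ⟨cy0, hcy0, hlt⟩ := (negGtLB_coe_iff _ (α y)).mp h1
          have htri := triangle hG none (some y) none
          have hsum : ((G none (some y)).add (G (some y) none)).val = some (c + cy0) := by
            simp [Weight.add, ovAdd, hc, hcy0]
          obtain ⟨c00, hc00, hle⟩ := le_val htri hsum
          have h0r := sat_of_some hc00 (diag_sat hG none)
          have h0 : (0:ℤ) ≤ c00 := by exact_mod_cast h0r
          have : (α y:ℤ) < c := by omega
          have : ((α y:ℕ):ℝ) < (c:ℝ) := by exact_mod_cast this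
          linarith
      · have hs := hvsat none (some y)
        rw [hred_0y y, if_neg h1] at hs
        have hb := sat_of_some hc hs
        have hxe : extV v (some y) - extV v none = v y - 0 := rfl
        rw [hxe] at hb
        linarith
    · -- a = some x bounded
      have hx : v x ≤ (α x:ℝ) := by
        rcases ha x rfl with h | h
        · exact h
        · exact absurd h (Finset.notMem_empty x)
      show (α y:ℝ) < v x + c
      by_cases h1 : gtLB (G (some x) (some y)) ((α y : WithBot ℕ)) ∨
          negGtLB (G (some y) none) ((α y : WithBot ℕ)) ∨
          negGtLB (G (some x) none) ((α x : WithBot ℕ))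
      · rcases h1 with h1 | h1 | h1
        · have h1' := (gtLB_coe_iff _ (α y)).mp h1
          rw [hc] at h1'
          simp only [ovLt] at h1'
          have : ((α y:ℕ):ℝ) < (c:ℝ) := by exact_mod_cast h1'
          have := hvnn x
          linarith
        · obtain ⟨cy0, hcy0, hlt⟩ := (negGtLB_coe_iff _ (α y)).mp h1
          have htri := triangle hG (some x) (some y) none
          have hsum : ((G (some x) (some y)).add (G (some y) none)).val = some (c + cy0) := by
            simp [Weight.add, ovAdd, hc, hcy0]
          obtain ⟨cx0, hcx0, hle⟩ := le_val htri hsum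
          have hbr := sat_of_some hcx0 (Fx0 x hx)
          have hxe : extV v none - extV v (some x) = 0 - v x := rfl
          rw [hxe] at hbr
          -- -v x ≤ cx0 ≤ c + cy0 ≤ c - α y - 1
          have h2 : cx0 ≤ c - (α y:ℤ) - 1 := by omega
          have h2r : (cx0:ℝ) ≤ (c:ℝ) - (α y:ℕ) - 1 := by exact_mod_cast h2
          linarith
        · exact absurd h1 (F1 x hx)
      · have hs := hvsat (some x) (some y)
        rw [hred_xy x y, if_neg h1] at hs
        have hb := sat_of_some hc hs
        have hxe : extV v (some y) - extV v (some x) = v y - v x := rfl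
        rw [hxe] at hb
        linarith
  -- main induction
  have main : ∀ T : Finset X, (∀ x ∈ T, (α x:ℝ) < v x) → ∃ u : Val X,
      (∀ x, x ∉ T → u x = v x) ∧ (∀ x ∈ T, (α x:ℝ) < u x) ∧
      (∀ a b, Gd α v T a → Gd α v T b → (G a b).sat (extV u b - extV u a)) ∧
      (∀ a, Gd α v T a → ∀ y : X, (α y:ℝ) < v y → y ∉ T → ∀ c : ℤ,
        (G a (some y)).val = some c → (α y:ℝ) < extV u a + c) := by
    intro T
    induction T using Finset.induction_on with
    | empty =>
      intro _
      exact ⟨v, fun x _ => rfl, fun x hx => absurd hx (Finset.notMem_empty x),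
        base1, fun a ha y hy _ c hc => base2 a ha y hy c hc⟩
    | @insert y T hyT ih =>
      intro hins
      have hTlt : ∀ x ∈ T, (α x:ℝ) < v x := fun x hx => hins x (Finset.mem_insert_of_mem hx)
      have hyv : (α y:ℝ) < v y := hins y (Finset.mem_insert_self y T)
      have hyub : ¬ (v y ≤ (α y:ℝ)) := not_le.mpr hyv
      obtain ⟨u, hu1, hu2, hu3, hu4⟩ := ih hTlt
      -- lower constraints
      set fpair : Unit ⊕ Vtx X ⊕ X → ℝ × Bool := fun i =>
        match i with
        | Sum.inl _ => ((α y:ℝ), true)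
        | Sum.inr (Sum.inl a) =>
          if Gd α v T a then
            (G (some y) a).val.elim ((α y:ℝ), true)
              (fun c => (extV u a - (c:ℝ), (G (some y) a).strict))
          else ((α y:ℝ), true)
        | Sum.inr (Sum.inr z) =>
          if (α z:ℝ) < v z ∧ z ∉ insert y T then
            (G (some y) (some z)).val.elim ((α y:ℝ), true)
              (fun c => ((α z:ℝ) - (c:ℝ), true))
          else ((α y:ℝ), true)
        with hfpair
      set g : Vtx X → Option (ℝ × Bool) := fun a =>
        if Gd α v T a then
          (G a (some y)).val.elim none
            (fun c : ℤ => some (extV u a + (c:ℝ), (G a (some y)).strict))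
        else none
        with hg
      have hgmem : ∀ a r b, g a = some (r, b) → Gd α v T a ∧ ∃ c : ℤ,
          (G a (some y)).val = some c ∧ r = extV u a + c ∧ b = (G a (some y)).strict := by
        intro a r b hab
        simp only [hg] at hab
        by_cases hGd : Gd α v T a
        · rw [if_pos hGd] at hab
          rcases hval : (G a (some y)).val with _ | c
          · rw [hval] at hab
            simp [Option.elim] at hab
          · rw [hval] at hab
            injection hab with hfc
            injection hfc with h1 h2
            exact ⟨hGd, c, rfl, h1.symm, h2.symm⟩
        · rw [if_neg hGd] at hab
          cases hab
      have hcompat : ∀ i a r b, g a = some (r, b) →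
          (fpair i).1 < r ∨ ((fpair i).1 = r ∧ (fpair i).2 = false ∧ b = false) := by
        intro i a r b hab
        obtain ⟨hGda, c, hc, hr, hb⟩ := hgmem a r b hab
        have hbase : (α y:ℝ) < r := by
          rw [hr]
          exact hu4 a hGda y hyv hyT c hc
        rcases i with _ | (a' | z)
        · exact Or.inl hbase
        · -- lower from vertex a'
          by_cases hGda' : Gd α v T a'
          · rcases hval2 : (G (some y) a').val with _ | c2
            · simp only [hfpair, if_pos hGda', hval2, Option.elim]
              exact Or.inl hbase
            · have hsat := hu3 a a' hGda hGda'
              have htri := triangle hG a (some y) a'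
              have hres := le_add_sat htri hc hval2 hsat
              simp only [hfpair, if_pos hGda', hval2, Option.elim]
              rcases hres with hres | ⟨hres, hf1, hf2⟩
              · left
                rw [hr]
                linarith
              · rw [hb, hr]
                rcases lt_or_eq_of_le hres with h' | h'
                · left; linarith
                · right
                  exact ⟨by linarith, hf2, hf1⟩
          · simp only [hfpair, if_neg hGda']
            exact Or.inl hbase
        · -- lower from future unbounded clock z
          by_cases hz : (α z:ℝ) < v z ∧ z ∉ insert y T
          · rcases hval2 : (G (some y) (some z)).val with _ | c2
            · simp only [hfpair, if_pos hz, hval2, Option.elim]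
              exact Or.inl hbase
            · have htri := triangle hG a (some y) (some z)
              have hsum : ((G a (some y)).add (G (some y) (some z))).val = some (c + c2) := by
                simp [Weight.add, ovAdd, hc, hval2]
              obtain ⟨caz, hcaz, hle⟩ := le_val htri hsum
              have hzT : z ∉ T := fun hmem => hz.2 (Finset.mem_insert_of_mem hmem)
              have h4 := hu4 a hGda z hz.1 hzT caz hcaz
              simp only [hfpair, if_pos hz, hval2, Option.elim]
              left
              rw [hr]
              have hler : (caz:ℝ) ≤ (c:ℝ) + c2 := by exact_mod_cast hle
              linarith
          · simp only [hfpair, if_neg hz]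
            exact Or.inl hbase
      obtain ⟨d, hdlo, hdhi⟩ := exists_sep (fun i => (fpair i).1) (fun i => (fpair i).2) g hcompat
      have D1 : (α y:ℝ) < d := by
        have h := hdlo (Sum.inl ())
        rcases h with h | ⟨_, h2⟩
        · exact h
        · simp [hfpair] at h2
      have D2 : ∀ a, Gd α v T a → (G (some y) a).sat (extV u a - d) := by
        intro a hGd
        rcases hval : (G (some y) a).val with _ | c
        · exact sat_none hval _
        · have h := hdlo (Sum.inr (Sum.inl a))
          simp only [hfpair, if_pos hGd, hval, Option.elim] at h
          rcases h with h | ⟨h1, h2⟩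
          · exact sat_some_of_lt hval (by linarith)
          · exact sat_some_nonstrict hval h2 (by linarith)
      have D3 : ∀ z : X, (α z:ℝ) < v z → z ∉ insert y T → ∀ c : ℤ,
          (G (some y) (some z)).val = some c → (α z:ℝ) < d + c := by
        intro z hz hzT c hc
        have h := hdlo (Sum.inr (Sum.inr z))
        simp only [hfpair, if_pos (⟨hz, hzT⟩ : (α z:ℝ) < v z ∧ z ∉ insert y T), hc, Option.elim] at h
        rcases h with h | ⟨_, h2⟩
        · linarith
        · simp at h2
      have D4 : ∀ a, Gd α v T a → (G a (some y)).sat (d - extV u a) := by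
        intro a hGd
        rcases hval : (G a (some y)).val with _ | c
        · exact sat_none hval _
        · have hga : g a = some (extV u a + (c:ℝ), (G a (some y)).strict) := by
            simp only [hg, if_pos hGd, hval, Option.elim]
          have h := hdhi a _ _ hga
          rcases h with h | ⟨h1, h2⟩
          · exact sat_some_of_lt hval (by linarith)
          · exact sat_some_nonstrict hval h2 (by linarith)
      -- the extended valuation
      refine ⟨Function.update u y d, ?_, ?_, ?_, ?_⟩
      · intro x hx
        have hxy : x ≠ y := fun h => hx (h ▸ Finset.mem_insert_self y T)
        have hxT : x ∉ T := fun h => hx (Finset.mem_insert_of_mem h)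
        rw [Function.update_of_ne hxy, hu1 x hxT]
      · intro x hx
        rcases Finset.mem_insert.mp hx with rfl | hxT
        · rw [Function.update_self]; exact D1
        · have hxy : x ≠ y := fun h => hyT (h ▸ hxT)
          rw [Function.update_of_ne hxy]
          exact hu2 x hxT
      · -- invariant (1)
        have hsplit : ∀ a, Gd α v (insert y T) a → Gd α v T a ∨ a = some y := by
          intro a ha
          rcases a with _ | x
          · exact Or.inl (Gd_none α v T)
          · rcases ha x rfl with h | h
            · exact Or.inl (Gd_some (Or.inl h))
            · rcases Finset.mem_insert.mp h with rfl | h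
              · exact Or.inr rfl
              · exact Or.inl (Gd_some (Or.inr h))
        have hext : ∀ a, Gd α v T a → extV (Function.update u y d) a = extV u a := by
          intro a hGd
          rcases a with _ | x
          · rfl
          · have hxy : x ≠ y := by
              rcases hGd x rfl with h | h
              · exact fun he => hyub (he ▸ h)
              · exact fun he => hyT (he ▸ h)
            show Function.update u y d x = u x
            rw [Function.update_of_ne hxy]
        have hexty : extV (Function.update u y d) (some y) = d := by
          show Function.update u y d y = d
          exact Function.update_self y d u
        intro a b ha hb
        rcases hsplit a ha with ha' | rfl <;> rcases hsplit b hb with hb' | rfl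
        · rw [hext a ha', hext b hb']
          exact hu3 a b ha' hb'
        · rw [hext a ha', hexty]
          exact D4 a ha'
        · rw [hext b hb', hexty]
          exact D2 b hb'
        · rw [hexty, sub_self]
          exact diag_sat hG (some y)
      · -- invariant (2)
        have hsplit : ∀ a, Gd α v (insert y T) a → Gd α v T a ∨ a = some y := by
          intro a ha
          rcases a with _ | x
          · exact Or.inl (Gd_none α v T)
          · rcases ha x rfl with h | h
            · exact Or.inl (Gd_some (Or.inl h))
            · rcases Finset.mem_insert.mp h with rfl | h
              · exact Or.inr rfl
              · exact Or.inl (Gd_some (Or.inr h))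
        have hext : ∀ a, Gd α v T a → extV (Function.update u y d) a = extV u a := by
          intro a hGd
          rcases a with _ | x
          · rfl
          · have hxy : x ≠ y := by
              rcases hGd x rfl with h | h
              · exact fun he => hyub (he ▸ h)
              · exact fun he => hyT (he ▸ h)
            show Function.update u y d x = u x
            rw [Function.update_of_ne hxy]
        intro a ha z hz hzT c hc
        have hzT' : z ∉ T := fun h => hzT (Finset.mem_insert_of_mem h)
        rcases hsplit a ha with ha' | rfl
        · rw [hext a ha']
          exact hu4 a ha' z hz hzT' c hc
        · have hexty : extV (Function.update u y d) (some y) = d := by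
            show Function.update u y d y = d
            exact Function.update_self y d u
          rw [hexty]
          exact D3 z hz hzT c hc
  -- assemble
  set Tall : Finset X := Finset.univ.filter (fun x => (α x:ℝ) < v x) with hTall
  have hTlt : ∀ x ∈ Tall, (α x:ℝ) < v x := by
    intro x hx
    rw [hTall, Finset.mem_filter] at hx
    exact hx.2
  obtain ⟨u, hu1, hu2, hu3, _⟩ := main Tall hTlt
  have hGdall : ∀ a : Vtx X, Gd α v Tall a := by
    intro a x hax
    rcases le_or_gt (v x) ((α x:ℝ)) with h | h
    · exact Or.inl h
    · exact Or.inr (by rw [hTall, Finset.mem_filter]; exact ⟨Finset.mem_univ x, h⟩)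
  have hmem : ∀ x : X, ((α x:ℝ) < v x → x ∈ Tall) ∧ (v x ≤ (α x:ℝ) → x ∉ Tall) := by
    intro x
    constructor
    · intro h; rw [hTall, Finset.mem_filter]; exact ⟨Finset.mem_univ x, h⟩
    · intro h hx
      exact absurd (hTlt x hx) (not_lt.mpr h)
  refine ⟨u, ⟨?_, fun a b => hu3 a b (hGdall a) (hGdall b)⟩, ?_, ?_⟩
  · intro x
    rcases le_or_gt (v x) ((α x:ℝ)) with h | h
    · rw [hu1 x ((hmem x).2 h)]
      exact hvnn x
    · have := hu2 x ((hmem x).1 h)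
      have hα : (0:ℝ) ≤ (α x:ℝ) := Nat.cast_nonneg _
      linarith
  · intro x hx
    exact hu1 x ((hmem x).2 hx)
  · intro x hx
    exact hu2 x ((hmem x).1 hx)

end Stmt15

/-- For every zone `Z` (with canonical distance graph `G`) and bound
function `α`, taking `L = U = α`: `Extra⁺_{LU}(Z) ⊆ Closure_α(Z)`. -/
theorem stmt15 {X : Type*} [Fintype X] (α : X → ℕ)
    (Z : Set (Val X)) (hZ : IsZone Z) (G : DGraph X) (hG : IsCanonGraph G Z) :
    sem (extraLU (fun x => (α x : WithBot ℕ)) (fun x => (α x : WithBot ℕ)) G)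
      ⊆ Closure α Z := by
  intro v hv
  obtain ⟨u, huG, hub, huu⟩ := Stmt15.key α G Z hG v hv
  have huZ : u ∈ Z := hG.1 ▸ huG
  have hvnn : Nonneg v := hv.1
  have hunn : Nonneg u := huG.1
  have hreg : regEq α v u := by
    constructor
    · intro x
      rcases le_or_gt (v x) ((α x : ℝ)) with hx | hx
      · right
        rw [hub x hx]
        exact ⟨rfl, Iff.rfl⟩
      · exact Or.inl ⟨hx, huu x hx⟩
    · intro x y hx hy
      rw [hub x hx, hub y hy]
  refine Set.mem_sUnion.mpr ⟨{ w | Nonneg w ∧ regEq α v w }, ⟨⟨v, hvnn, rfl⟩, ?_⟩, ?_⟩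
  · exact ⟨u, ⟨hunn, hreg⟩, huZ⟩
  · refine ⟨hvnn, ?_, ?_⟩
    · intro x
      right
      exact ⟨rfl, Iff.rfl⟩
    · intro x y _ _
      exact Iff.rfl

end TAform

end
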